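/- Let w ≥ 4, assume a_{w-1} = 1, and let 0 ≤ s < t be integers with 2^t ≤ w−2. Then the number of pairs of row vectors (u, v) ∈ F₂^w × F₂^w such that u·B^{2^k} + v·Q_{2^k} = 0 for every integer k with s ≤ k ≤ t equals 2^{w − (2^t − 2^s)}. (Hence, if (u, v) is uniformly distributed on F₂^w × F₂^w, the probability that all these equations hold is 2^{−w}·2^{−(2^t − 2^s)}.) -/

import Mathlib

open Matrix

/-- The matrix `B` of MT-type recursions: first row zero, row `i` (0-indexed,
`1 ≤ i ≤ w-2`) is the standard basis row vector with a `1` in column `i+1`,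
and the last row is `(a_{w-1}, …, a_0)` (stored as `a 0, …, a (w-1)`). -/
def mtB (w : ℕ) (a : Fin w → ZMod 2) : Matrix (Fin w) (Fin w) (ZMod 2) :=
  Matrix.of fun i j =>
    if (i : ℕ) = w - 1 then a j
    else if 1 ≤ (i : ℕ) ∧ (j : ℕ) = (i : ℕ) + 1 then 1 else 0

/-- The matrix `C`: its only nonzero entry is a `1` in position `(1,2)` (1-indexed). -/
def mtC (w : ℕ) : Matrix (Fin w) (Fin w) (ZMod 2) :=
  Matrix.of fun i j => if (i : ℕ) = 0 ∧ (j : ℕ) = 1 then 1 else 0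

/-- `Q_k = Σ_{i=0}^{k-1} B^i · C · B^{k-1-i}`. -/
def mtQ (w : ℕ) (a : Fin w → ZMod 2) (k : ℕ) : Matrix (Fin w) (Fin w) (ZMod 2) :=
  ∑ i ∈ Finset.range k, (mtB w a) ^ i * mtC w * (mtB w a) ^ (k - 1 - i)

section Lemmas
variable {w : ℕ} (a : Fin w → ZMod 2)

lemma sum_ite_fin (c : ℕ) (hc : c < w) (f : Fin w → ZMod 2) :
    (∑ x : Fin w, (if (x : ℕ) = c then 1 else 0) * f x) = f ⟨c, hc⟩ := by
  rw [Finset.sum_eq_single (⟨c, hc⟩ : Fin w)]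
  · simp
  · intro b _ hb
    have : (b : ℕ) ≠ c := fun h => hb (Fin.ext h)
    simp [this]
  · simp

lemma row_pow (hw : 4 ≤ w) (m : ℕ) (i : Fin w) (hi : 1 ≤ (i : ℕ))
    (him : (i : ℕ) + m ≤ w - 1) (j : Fin w) :
    ((mtB w a) ^ m) i j = if (j : ℕ) = (i : ℕ) + m then 1 else 0 := by
  induction m generalizing j with
  | zero =>
    simp only [pow_zero, Matrix.one_apply, Nat.add_zero]
    congr 1
    simp [Fin.ext_iff, eq_comm]
  | succ m ih =>
    rw [pow_succ, Matrix.mul_apply]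
    have him' : (i : ℕ) + m ≤ w - 1 := by omega
    have hlt : (i : ℕ) + m < w := by omega
    calc (∑ x : Fin w, ((mtB w a) ^ m) i x * mtB w a x j)
        = ∑ x : Fin w, (if (x : ℕ) = (i : ℕ) + m then 1 else 0) * mtB w a x j := by
          apply Finset.sum_congr rfl; intro x _
          rw [ih him' x]
      _ = mtB w a ⟨(i : ℕ) + m, hlt⟩ j := sum_ite_fin ((i:ℕ)+m) hlt _
      _ = if (j : ℕ) = (i : ℕ) + (m+1) then 1 else 0 := by
          have h1 : ¬((i:ℕ) + m = w - 1) := by omega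
          have h2 : 1 ≤ (i:ℕ) + m := by omega
          have h3 : (i:ℕ) + (m+1) = (i:ℕ) + m + 1 := by omega
          simp only [mtB, Matrix.of_apply, h1, if_false, h2, true_and, h3]

lemma col_zero_pow (hw : 4 ≤ w) (ha : a ⟨0, Nat.lt_of_lt_of_le (by decide) hw⟩ = 1) (m : ℕ) (hm : 1 ≤ m)
    (hmw : m ≤ w - 1) : ∀ i : Fin w, (i : ℕ) ≤ w - m →
    ((mtB w a) ^ m) i ⟨0, Nat.lt_of_lt_of_le (by decide) hw⟩ = if (i : ℕ) = w - m then 1 else 0 := by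
  induction m with
  | zero => omega
  | succ m ih =>
    intro i hi
    rcases Nat.eq_or_lt_of_le hm with h1 | h1
    · have hm0 : m = 0 := by omega
      subst hm0
      simp only [pow_one, mtB, Matrix.of_apply]
      by_cases hi1 : (i : ℕ) = w - 1
      · simp [hi1, ha]
      · simp [hi1]
    · have hm1 : 1 ≤ m := by omega
      have hmw' : m ≤ w - 1 := by omega
      rw [pow_succ', Matrix.mul_apply]
      have hinw : ¬((i : ℕ) = w - 1) := by omega
      by_cases hi1 : 1 ≤ (i : ℕ)
      · have hlt : (i : ℕ) + 1 < w := by omega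
        calc (∑ x : Fin w, mtB w a i x * ((mtB w a) ^ m) x ⟨0, Nat.lt_of_lt_of_le (by decide) hw⟩)
            = ∑ x : Fin w, (if (x : ℕ) = (i : ℕ) + 1 then 1 else 0) *
                ((mtB w a) ^ m) x ⟨0, Nat.lt_of_lt_of_le (by decide) hw⟩ := by
              apply Finset.sum_congr rfl; intro x _
              simp only [mtB, Matrix.of_apply, hinw, if_false, hi1, true_and]
          _ = ((mtB w a) ^ m) ⟨(i : ℕ) + 1, hlt⟩ ⟨0, Nat.lt_of_lt_of_le (by decide) hw⟩ :=
              sum_ite_fin _ hlt _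
          _ = if ((i : ℕ) + 1) = w - m then 1 else 0 := by
              exact ih hm1 hmw' ⟨(i:ℕ)+1, hlt⟩ (by simp; omega)
          _ = if (i : ℕ) = w - (m + 1) then 1 else 0 := by
              congr 1; simp only [eq_iff_iff]; omega
      · have hi0 : (i : ℕ) = 0 := by omega
        have h0 : ¬((0:ℕ) = w - 1) := by omega
        have hz : ∀ x : Fin w, mtB w a i x * ((mtB w a) ^ m) x ⟨0, Nat.lt_of_lt_of_le (by decide) hw⟩ = 0 := by
          intro x
          simp [mtB, hi0, h0]
        rw [Finset.sum_congr rfl (fun x _ => hz x), Finset.sum_const_zero]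
        have : ¬((i : ℕ) = w - (m + 1)) := by omega
        simp [this]

lemma col_pow (hw : 4 ≤ w) (m : ℕ) (j : Fin w) (hj : m < (j : ℕ)) :
    ∀ i : Fin w, (i : ℕ) < w - m →
    ((mtB w a) ^ m) i j = if (i : ℕ) = (j : ℕ) - m then 1 else 0 := by
  induction m with
  | zero =>
    intro i hi
    simp only [pow_zero, Matrix.one_apply, Nat.sub_zero]
    congr 1
    simp [Fin.ext_iff]
  | succ m ih =>
    intro i hi
    have hj' : m < (j : ℕ) := by omega
    rw [pow_succ', Matrix.mul_apply]
    have hinw : ¬((i : ℕ) = w - 1) := by omega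
    by_cases hi1 : 1 ≤ (i : ℕ)
    · have hlt : (i : ℕ) + 1 < w := by omega
      calc (∑ x : Fin w, mtB w a i x * ((mtB w a) ^ m) x j)
          = ∑ x : Fin w, (if (x : ℕ) = (i : ℕ) + 1 then 1 else 0) * ((mtB w a) ^ m) x j := by
            apply Finset.sum_congr rfl; intro x _
            simp only [mtB, Matrix.of_apply, hinw, if_false, hi1, true_and]
        _ = ((mtB w a) ^ m) ⟨(i : ℕ) + 1, hlt⟩ j := sum_ite_fin _ hlt _
        _ = if ((i : ℕ) + 1) = (j : ℕ) - m then 1 else 0 := by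
            exact ih hj' ⟨(i:ℕ)+1, hlt⟩ (by simp; omega)
        _ = if (i : ℕ) = (j : ℕ) - (m + 1) then 1 else 0 := by
            congr 1; simp only [eq_iff_iff]; omega
    · have hi0 : (i : ℕ) = 0 := by omega
      have h0 : ¬((0:ℕ) = w - 1) := by omega
      have hz : ∀ x : Fin w, mtB w a i x * ((mtB w a) ^ m) x j = 0 := by
        intro x; simp [mtB, hi0, h0]
      rw [Finset.sum_congr rfl (fun x _ => hz x), Finset.sum_const_zero]
      have : ¬((i : ℕ) = (j : ℕ) - (m + 1)) := by omega
      simp [this]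

lemma mul_C_mul (hw : 4 ≤ w) (M N : Matrix (Fin w) (Fin w) (ZMod 2)) (i j : Fin w) :
    (M * mtC w * N) i j = M i ⟨0, Nat.lt_of_lt_of_le (by decide) hw⟩ * N ⟨1, by omega⟩ j := by
  have h1 : ∀ q : Fin w, (M * mtC w) i q = if (q : ℕ) = 1 then M i ⟨0, Nat.lt_of_lt_of_le (by decide) hw⟩ else 0 := by
    intro q
    rw [Matrix.mul_apply]
    by_cases hq : (q : ℕ) = 1
    · simp only [hq, if_true]
      rw [Finset.sum_eq_single (⟨0, Nat.lt_of_lt_of_le (by decide) hw⟩ : Fin w)]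
      · simp [mtC, hq]
      · intro b _ hb
        have : ¬((b:ℕ) = 0) := fun h => hb (Fin.ext h)
        simp [mtC, this]
      · simp
    · have : ∀ p : Fin w, M i p * mtC w p q = 0 := by
        intro p; simp [mtC, hq]
      simp [Finset.sum_congr rfl (fun p _ => this p), hq]
  rw [Matrix.mul_apply, Finset.sum_congr rfl (fun q _ => by rw [h1 q])]
  rw [Finset.sum_eq_single (⟨1, by omega⟩ : Fin w)]
  · simp
  · intro b _ hb
    have : ¬((b:ℕ) = 1) := fun h => hb (Fin.ext h)
    simp [this]
  · simp

lemma q_entry (hw : 4 ≤ w) (n : ℕ) (hn1 : 1 ≤ n) (hnw : n ≤ w - 2) (i j : Fin w) :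
    mtQ w a n i j = if 1 ≤ (j : ℕ) ∧ (j : ℕ) ≤ n
      then ((mtB w a) ^ (n - (j : ℕ))) i ⟨0, Nat.lt_of_lt_of_le (by decide) hw⟩ else 0 := by
  unfold mtQ
  rw [Matrix.sum_apply]
  have hterm : ∀ k ∈ Finset.range n, ((mtB w a) ^ k * mtC w * (mtB w a) ^ (n - 1 - k)) i j
      = ((mtB w a) ^ k) i ⟨0, Nat.lt_of_lt_of_le (by decide) hw⟩ * (if (j : ℕ) = n - k then 1 else 0) := by
    intro k hk
    have hk' : k < n := Finset.mem_range.mp hk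
    rw [mul_C_mul hw]
    congr 1
    rw [row_pow a hw (n - 1 - k) ⟨1, by omega⟩ (by simp) (by simp; omega)]
    congr 1
    simp only [eq_iff_iff]
    omega
  rw [Finset.sum_congr rfl hterm]
  by_cases hj : 1 ≤ (j : ℕ) ∧ (j : ℕ) ≤ n
  · rw [Finset.sum_eq_single (n - (j : ℕ))]
    · have e1 : (j : ℕ) = n - (n - (j:ℕ)) := by omega
      rw [if_pos e1, mul_one, if_pos hj]
    · intro b hbmem hb
      have hb' : b < n := Finset.mem_range.mp hbmem
      have : ¬((j : ℕ) = n - b) := by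
        intro h; exact hb (by omega)
      simp [this]
    · intro h
      exact absurd (Finset.mem_range.mpr (by omega)) h
  · rw [if_neg hj]
    apply Finset.sum_eq_zero
    intro k hk
    have hk' : k < n := Finset.mem_range.mp hk
    have : ¬((j : ℕ) = n - k) := by omega
    simp [this]

end Lemmas

section Lemmas2
variable {w : ℕ} (a : Fin w → ZMod 2)

lemma vecMul_apply (v : Fin w → ZMod 2) (M : Matrix (Fin w) (Fin w) (ZMod 2)) (j : Fin w) :
    (v ᵥ* M) j = ∑ x : Fin w, v x * M x j := by
  simp [Matrix.vecMul, dotProduct]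

lemma vq_apply (hw : 4 ≤ w) (n : ℕ) (hn1 : 1 ≤ n) (hnw : n ≤ w - 2)
    (v : Fin w → ZMod 2) (j : Fin w) :
    (v ᵥ* mtQ w a n) j = if 1 ≤ (j : ℕ) ∧ (j : ℕ) ≤ n
      then (v ᵥ* (mtB w a) ^ (n - (j : ℕ))) ⟨0, Nat.lt_of_lt_of_le (by decide) hw⟩ else 0 := by
  rw [vecMul_apply]
  rw [Finset.sum_congr rfl (fun x _ => by rw [q_entry a hw n hn1 hnw x j])]
  by_cases hj : 1 ≤ (j : ℕ) ∧ (j : ℕ) ≤ n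
  · rw [if_pos hj, vecMul_apply]
    simp [hj]
  · rw [if_neg hj]
    simp [hj]

lemma bq_entry (hw : 4 ≤ w) (n : ℕ) (hn1 : 1 ≤ n) (hnw : n ≤ w - 2) (i j : Fin w) :
    ((mtB w a) ^ n * mtQ w a n) i j = if 1 ≤ (j : ℕ) ∧ (j : ℕ) ≤ n
      then ((mtB w a) ^ (2 * n - (j : ℕ))) i ⟨0, Nat.lt_of_lt_of_le (by decide) hw⟩ else 0 := by
  rw [Matrix.mul_apply]
  rw [Finset.sum_congr rfl (fun x _ => by rw [q_entry a hw n hn1 hnw x j])]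
  by_cases hj : 1 ≤ (j : ℕ) ∧ (j : ℕ) ≤ n
  · rw [if_pos hj]
    have : 2 * n - (j : ℕ) = n + (n - (j : ℕ)) := by omega
    rw [this, pow_add, Matrix.mul_apply]
    simp [hj]
  · rw [if_neg hj]
    simp [hj]

lemma vbq_zero_iff (hw : 4 ≤ w) (n : ℕ) (hn1 : 1 ≤ n) (hnw : n ≤ w - 2)
    (v : Fin w → ZMod 2) :
    v ᵥ* ((mtB w a) ^ n * mtQ w a n) = 0 ↔
      ∀ m : ℕ, n ≤ m → m < 2 * n → (v ᵥ* (mtB w a) ^ m) ⟨0, Nat.lt_of_lt_of_le (by decide) hw⟩ = 0 := by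
  have key : ∀ j : Fin w, (v ᵥ* ((mtB w a) ^ n * mtQ w a n)) j =
      if 1 ≤ (j : ℕ) ∧ (j : ℕ) ≤ n
        then (v ᵥ* (mtB w a) ^ (2 * n - (j : ℕ))) ⟨0, Nat.lt_of_lt_of_le (by decide) hw⟩ else 0 := by
    intro j
    rw [vecMul_apply]
    rw [Finset.sum_congr rfl (fun x _ => by rw [bq_entry a hw n hn1 hnw x j])]
    by_cases hj : 1 ≤ (j : ℕ) ∧ (j : ℕ) ≤ n
    · rw [if_pos hj, vecMul_apply]; simp [hj]
    · rw [if_neg hj]; simp [hj]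
  constructor
  · intro h m hm1 hm2
    have hjw : 2 * n - m < w := by omega
    have := congrFun h ⟨2 * n - m, hjw⟩
    rw [key ⟨2 * n - m, hjw⟩] at this
    have hcond : 1 ≤ ((⟨2 * n - m, hjw⟩ : Fin w) : ℕ) ∧ ((⟨2 * n - m, hjw⟩ : Fin w) : ℕ) ≤ n := by
      simp; omega
    rw [if_pos hcond] at this
    have he : 2 * n - ((⟨2 * n - m, hjw⟩ : Fin w) : ℕ) = m := by simp; omega
    rw [he] at this
    exact this
  · intro h
    funext j
    rw [key j]
    by_cases hj : 1 ≤ (j : ℕ) ∧ (j : ℕ) ≤ n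
    · rw [if_pos hj]
      exact h (2 * n - (j : ℕ)) (by omega) (by omega)
    · rw [if_neg hj]; rfl

lemma q_add (m n : ℕ) :
    mtQ w a (m + n) = mtQ w a m * (mtB w a) ^ n + (mtB w a) ^ m * mtQ w a n := by
  unfold mtQ
  rw [Finset.range_eq_Ico, ← Finset.sum_Ico_consecutive _ (Nat.zero_le m) (Nat.le_add_right m n)]
  congr 1
  · rw [Finset.sum_mul, ← Finset.range_eq_Ico]
    apply Finset.sum_congr rfl
    intro i hi
    have hi' : i < m := Finset.mem_range.mp hi
    have : m + n - 1 - i = (m - 1 - i) + n := by omega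
    rw [this, pow_add, ← mul_assoc]
  · rw [Finset.mul_sum, Finset.sum_Ico_eq_sum_range]
    have hmn : m + n - m = n := by omega
    rw [hmn, Finset.range_eq_Ico]
    apply Finset.sum_congr rfl
    intro i hi
    have hi' : i < n := (Finset.mem_Ico.mp hi).2
    have h1 : m + n - 1 - (m + i) = n - 1 - i := by omega
    rw [h1, pow_add]; noncomm_ring

lemma step_id (u v : Fin w → ZMod 2) (N : ℕ) :
    u ᵥ* (mtB w a) ^ (2 * N) + v ᵥ* mtQ w a (2 * N) =
      (u ᵥ* (mtB w a) ^ N + v ᵥ* mtQ w a N) ᵥ* (mtB w a) ^ N +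
        v ᵥ* ((mtB w a) ^ N * mtQ w a N) := by
  have h2 : 2 * N = N + N := by omega
  rw [h2, q_add, Matrix.vecMul_add, Matrix.add_vecMul, Matrix.vecMul_vecMul,
    Matrix.vecMul_vecMul, pow_add]
  abel

end Lemmas2

section Lemmas3
variable {w : ℕ} (a : Fin w → ZMod 2)

lemma sys_equiv (hw : 4 ≤ w) (s t : ℕ) (hst : s < t) (ht : 2 ^ t ≤ w - 2)
    (u v : Fin w → ZMod 2) :
    (∀ k : ℕ, s ≤ k → k ≤ t →
        u ᵥ* (mtB w a) ^ (2 ^ k) + v ᵥ* mtQ w a (2 ^ k) = 0) ↔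
      ((u ᵥ* (mtB w a) ^ (2 ^ s) + v ᵥ* mtQ w a (2 ^ s) = 0) ∧
        ∀ m : ℕ, 2 ^ s ≤ m → m < 2 ^ t → (v ᵥ* (mtB w a) ^ m) ⟨0, Nat.lt_of_lt_of_le (by decide) hw⟩ = 0) := by
  have hpow : ∀ k : ℕ, k ≤ t → 2 ^ k ≤ w - 2 := by
    intro k hk
    exact le_trans (Nat.pow_le_pow_right (by norm_num) hk) ht
  constructor
  · intro h
    refine ⟨h s le_rfl (le_of_lt hst), ?_⟩
    intro m hm1 hm2
    set k := Nat.log 2 m with hkdef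
    have hm0 : m ≠ 0 := by
      have := Nat.one_le_two_pow (n := s); omega
    have h1 : 2 ^ k ≤ m := Nat.pow_log_le_self 2 hm0
    have h2 : m < 2 ^ (k + 1) := Nat.lt_pow_succ_log_self (by norm_num) m
    have hsk : s ≤ k := by
      by_contra hc
      push_neg at hc
      have : k + 1 ≤ s := hc
      have := Nat.pow_le_pow_right (show 1 ≤ 2 by norm_num) this
      omega
    have hkt : k + 1 ≤ t := by
      by_contra hc
      push_neg at hc
      have : t ≤ k := by omega
      have := Nat.pow_le_pow_right (show 1 ≤ 2 by norm_num) this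
      omega
    have Ek := h k hsk (by omega)
    have Ek1 := h (k + 1) (by omega) hkt
    have h2N : (2:ℕ) ^ (k + 1) = 2 * 2 ^ k := by rw [pow_succ]; ring
    rw [h2N] at Ek1
    rw [step_id, Ek, Matrix.zero_vecMul, zero_add] at Ek1
    rw [vbq_zero_iff a hw (2 ^ k) (Nat.one_le_two_pow) (hpow k (by omega)) v] at Ek1
    exact Ek1 m h1 (by omega)
  · rintro ⟨hE, hC⟩
    intro k hks
    induction k, hks using Nat.le_induction with
    | base => intro _; exact hE
    | succ k hks ih =>
      intro hk1t
      have Ek := ih (by omega)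
      have h2N : (2:ℕ) ^ (k + 1) = 2 * 2 ^ k := by rw [pow_succ]; ring
      rw [h2N, step_id, Ek, Matrix.zero_vecMul, zero_add]
      rw [vbq_zero_iff a hw (2 ^ k) (Nat.one_le_two_pow) (hpow k (by omega)) v]
      intro m hm1 hm2
      apply hC
      · exact le_trans (Nat.pow_le_pow_right (by norm_num) hks) hm1
      · have : 2 * 2 ^ k = 2 ^ (k + 1) := by rw [pow_succ]; ring
        have := Nat.pow_le_pow_right (show 1 ≤ 2 by norm_num) hk1t
        omega

end Lemmas3

section Lemmas4
variable {w : ℕ} (a : Fin w → ZMod 2)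

lemma sum_ite_fin_mul (c : ℕ) (hc : c < w) (δ : ZMod 2) (f : Fin w → ZMod 2) :
    (∑ x : Fin w, (if (x : ℕ) = c then δ else 0) * f x) = δ * f ⟨c, hc⟩ := by
  rw [Finset.sum_eq_single (⟨c, hc⟩ : Fin w)]
  · simp
  · intro b _ hb
    have : (b : ℕ) ≠ c := fun h => hb (Fin.ext h)
    simp [this]
  · simp

lemma ex_v (hw : 4 ≤ w) (ha : a ⟨0, Nat.lt_of_lt_of_le (by decide) hw⟩ = 1) :
    ∀ T : ℕ, 1 ≤ T → T ≤ w - 2 → ∀ φ : ℕ → ZMod 2,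
    ∃ v : Fin w → ZMod 2, (∀ j : Fin w, (j : ℕ) ≠ 0 → (j : ℕ) ≤ w - T → v j = 0) ∧
      ∀ m : ℕ, m < T → (v ᵥ* (mtB w a) ^ m) ⟨0, Nat.lt_of_lt_of_le (by decide) hw⟩ = φ m := by
  intro T
  induction T with
  | zero => omega
  | succ T ih =>
    intro hT1 hTw φ
    rcases Nat.eq_or_lt_of_le hT1 with h1 | h1
    · -- T + 1 = 1, i.e. T = 0
      have hT0 : T = 0 := by omega
      subst hT0
      refine ⟨fun j => if (j : ℕ) = 0 then φ 0 else 0, ?_, ?_⟩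
      · intro j hj _; simp [hj]
      · intro m hm
        have hm0 : m = 0 := by omega
        subst hm0
        rw [pow_zero, Matrix.vecMul_one]
        simp
    · -- T ≥ 1
      have hT1' : 1 ≤ T := by omega
      obtain ⟨v, hsupp, hval⟩ := ih hT1' (by omega) φ
      set δ := φ T - (v ᵥ* (mtB w a) ^ T) ⟨0, Nat.lt_of_lt_of_le (by decide) hw⟩ with hδ
      refine ⟨v + fun j : Fin w => if (j : ℕ) = w - T then δ else 0, ?_, ?_⟩
      · intro j hj0 hjT
        have h1 : v j = 0 := hsupp j hj0 (by omega)
        have h2 : ¬((j : ℕ) = w - T) := by omega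
        simp [h1, h2]
      · intro m hm
        rw [Matrix.add_vecMul, Pi.add_apply]
        have hind : ((fun j : Fin w => if (j : ℕ) = w - T then δ else 0) ᵥ*
            (mtB w a) ^ m) ⟨0, Nat.lt_of_lt_of_le (by decide) hw⟩ = δ * ((mtB w a) ^ m) ⟨w - T, by omega⟩ ⟨0, Nat.lt_of_lt_of_le (by decide) hw⟩ := by
          rw [vecMul_apply]
          exact sum_ite_fin_mul (w - T) (by omega) δ _
        rcases Nat.lt_or_ge m T with hmT | hmT
        · -- m < T : the new part contributes 0
          have hentry : ((mtB w a) ^ m) ⟨w - T, by omega⟩ ⟨0, Nat.lt_of_lt_of_le (by decide) hw⟩ = 0 := by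
            rcases Nat.eq_zero_or_pos m with hm0 | hm0
            · subst hm0
              rw [pow_zero, Matrix.one_apply]
              have : ¬((⟨w - T, by omega⟩ : Fin w) = ⟨0, Nat.lt_of_lt_of_le (by decide) hw⟩) := by
                simp [Fin.ext_iff]; omega
              simp [this]
            · rw [col_zero_pow a hw ha m hm0 (by omega) _ (by simp; omega)]
              have : ¬(w - T = w - m) := by omega
              simp [this]
          rw [hind, hentry, mul_zero, add_zero]
          exact hval m hmT
        · -- m = T
          have hmT' : m = T := by omega
          subst hmT'
          have hentry : ((mtB w a) ^ m) ⟨w - m, by omega⟩ ⟨0, Nat.lt_of_lt_of_le (by decide) hw⟩ = 1 := by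
            rw [col_zero_pow a hw ha m (by omega) (by omega) _ (by simp)]
            simp
          rw [hind]
          have : (⟨w - m, by omega⟩ : Fin w) = ⟨w - m, by omega⟩ := rfl
          rw [hentry, mul_one, hδ]
          ring

lemma ex_u (hw : 4 ≤ w) (ha : a ⟨0, Nat.lt_of_lt_of_le (by decide) hw⟩ = 1) (n : ℕ) (hn1 : 1 ≤ n)
    (hn : 2 * n ≤ w - 2) (y : Fin w → ZMod 2) :
    ∃ u : Fin w → ZMod 2, ((u ᵥ* (mtB w a) ^ n) ⟨0, Nat.lt_of_lt_of_le (by decide) hw⟩ = y ⟨0, Nat.lt_of_lt_of_le (by decide) hw⟩) ∧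
      ∀ j : Fin w, n < (j : ℕ) → (u ᵥ* (mtB w a) ^ n) j = y j := by
  set u : Fin w → ZMod 2 := fun p => if (p : ℕ) = w - n then y ⟨0, Nat.lt_of_lt_of_le (by decide) hw⟩ else
    (if h : 1 ≤ (p : ℕ) ∧ (p : ℕ) ≤ w - 1 - n then
      y ⟨(p : ℕ) + n, by omega⟩ -
        y ⟨0, Nat.lt_of_lt_of_le (by decide) hw⟩ * ((mtB w a) ^ n) ⟨w - n, by omega⟩ ⟨(p : ℕ) + n, by omega⟩
    else 0) with hu
  have hu_top : u ⟨w - n, by omega⟩ = y ⟨0, Nat.lt_of_lt_of_le (by decide) hw⟩ := by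
    rw [hu]; simp
  have hu_low : ∀ (p : Fin w) (_h1 : 1 ≤ (p : ℕ)) (_h2 : (p : ℕ) ≤ w - 1 - n),
      u p = y ⟨(p : ℕ) + n, by omega⟩ -
        y ⟨0, Nat.lt_of_lt_of_le (by decide) hw⟩ * ((mtB w a) ^ n) ⟨w - n, by omega⟩ ⟨(p : ℕ) + n, by omega⟩ := by
    intro p h1 h2
    rw [hu]
    simp only
    rw [if_neg (by omega : ¬((p : ℕ) = w - n)), dif_pos ⟨h1, h2⟩]
  have hu_zero : ∀ p : Fin w, (p : ℕ) ≠ w - n → ¬(1 ≤ (p : ℕ) ∧ (p : ℕ) ≤ w - 1 - n) →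
      u p = 0 := by
    intro p h1 h2
    rw [hu]
    simp only
    rw [if_neg h1, dif_neg h2]
  refine ⟨u, ?_, ?_⟩
  · rw [vecMul_apply]
    rw [Finset.sum_eq_single (⟨w - n, by omega⟩ : Fin w)]
    · have hent : ((mtB w a) ^ n) ⟨w - n, by omega⟩ ⟨0, Nat.lt_of_lt_of_le (by decide) hw⟩ = 1 := by
        rw [col_zero_pow a hw ha n hn1 (by omega) _ (by simp)]
        simp
      rw [hent, mul_one, hu_top]
    · intro b _ hb
      have hbv : (b : ℕ) ≠ w - n := fun h => hb (Fin.ext h)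
      rcases Nat.lt_or_ge (b : ℕ) (w - n) with hlt | hge
      · have hent : ((mtB w a) ^ n) b ⟨0, Nat.lt_of_lt_of_le (by decide) hw⟩ = 0 := by
          rw [col_zero_pow a hw ha n hn1 (by omega) b (by omega)]
          simp [hbv]
        rw [hent, mul_zero]
      · rw [hu_zero b hbv (by omega), zero_mul]
    · simp
  · intro j hj
    have hjw : (j : ℕ) < w := j.isLt
    rw [vecMul_apply]
    have hsummand : ∀ p : Fin w, u p * ((mtB w a) ^ n) p j =
        (if p = (⟨(j : ℕ) - n, by omega⟩ : Fin w) then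
            y j - y ⟨0, Nat.lt_of_lt_of_le (by decide) hw⟩ * ((mtB w a) ^ n) ⟨w - n, by omega⟩ j else 0) +
        (if p = (⟨w - n, by omega⟩ : Fin w) then
            y ⟨0, Nat.lt_of_lt_of_le (by decide) hw⟩ * ((mtB w a) ^ n) ⟨w - n, by omega⟩ j else 0) := by
      intro p
      by_cases hp1 : p = (⟨(j : ℕ) - n, by omega⟩ : Fin w)
      · have hpv : (p : ℕ) = (j : ℕ) - n := by rw [hp1]
        have hne2 : ¬(p = (⟨w - n, by omega⟩ : Fin w)) := by
          intro h
          have : (p : ℕ) = w - n := by rw [h]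
          omega
        rw [if_pos hp1, if_neg hne2, add_zero]
        have hent : ((mtB w a) ^ n) p j = 1 := by
          rw [col_pow a hw n j hj p (by omega)]
          simp [hpv]
        rw [hent, mul_one, hu_low p (by omega) (by omega)]
        have hfin : ∀ hh : (p : ℕ) + n < w, (⟨(p : ℕ) + n, hh⟩ : Fin w) = j :=
          fun hh => Fin.ext (by simp; omega)
        rw [hfin]
      · by_cases hp2 : p = (⟨w - n, by omega⟩ : Fin w)
        · rw [if_neg hp1, if_pos hp2, zero_add, hp2, hu_top]
        · rw [if_neg hp1, if_neg hp2, add_zero]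
          have hbv : (p : ℕ) ≠ w - n := by
            intro h; exact hp2 (Fin.ext h)
          have hbv1 : (p : ℕ) ≠ (j : ℕ) - n := by
            intro h; exact hp1 (Fin.ext h)
          rcases Nat.lt_or_ge (p : ℕ) (w - n) with hlt | hge
          · have hent : ((mtB w a) ^ n) p j = 0 := by
              rw [col_pow a hw n j hj p (by omega)]
              simp [hbv1]
            rw [hent, mul_zero]
          · rw [hu_zero p hbv (by omega), zero_mul]
    rw [Finset.sum_congr rfl (fun p _ => hsummand p), Finset.sum_add_distrib]
    rw [Finset.sum_ite_eq' Finset.univ, Finset.sum_ite_eq' Finset.univ]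
    simp

end Lemmas4


open Finset in
/-- the number of pairs `(u, v)` of row vectors satisfying
`u·B^{2^k} + v·Q_{2^k} = 0` for all `s ≤ k ≤ t` is `2^{w - (2^t - 2^s)}`. -/
theorem stmt13 (w : ℕ) (hw : 4 ≤ w) (a : Fin w → ZMod 2) (ha : a ⟨0, by omega⟩ = 1)
    (s t : ℕ) (hst : s < t) (ht : 2 ^ t ≤ w - 2) :
    Nat.card {p : (Fin w → ZMod 2) × (Fin w → ZMod 2) //
      ∀ k : ℕ, s ≤ k → k ≤ t →
        p.1 ᵥ* (mtB w a) ^ (2 ^ k) + p.2 ᵥ* mtQ w a (2 ^ k) = 0}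
    = 2 ^ (w - (2 ^ t - 2 ^ s)) := by
  set n : ℕ := 2 ^ s with hn
  set d : ℕ := 2 ^ t - 2 ^ s with hd
  have hn1 : 1 ≤ n := Nat.one_le_two_pow
  have h2n : 2 * n ≤ 2 ^ t := by
    rw [hn, ← pow_succ']
    exact Nat.pow_le_pow_right (by norm_num) hst
  have hnw : n ≤ w - 2 := by
    have := Nat.pow_le_pow_right (show 1 ≤ 2 by norm_num) (le_of_lt hst)
    omega
  have hd1 : 1 ≤ d := by
    have := Nat.pow_lt_pow_right (show 1 < 2 by norm_num) hst
    omega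
  -- the counting homomorphism
  set f : ((Fin w → ZMod 2) × (Fin w → ZMod 2)) →+
      ((Fin w → ZMod 2) × (Fin d → ZMod 2)) :=
    AddMonoidHom.mk' (fun p =>
      (p.1 ᵥ* (mtB w a) ^ n + p.2 ᵥ* mtQ w a n,
        fun i : Fin d => (p.2 ᵥ* (mtB w a) ^ (n + (i : ℕ))) ⟨0, by omega⟩))
      (by
        intro p q
        refine Prod.ext ?_ ?_
        · show (p.1 + q.1) ᵥ* _ + (p.2 + q.2) ᵥ* _ = _
          rw [Matrix.add_vecMul, Matrix.add_vecMul]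
          show _ = (p.1 ᵥ* _ + p.2 ᵥ* _) + (q.1 ᵥ* _ + q.2 ᵥ* _)
          abel
        · funext i
          show ((p.2 + q.2) ᵥ* _) _ = _
          rw [Matrix.add_vecMul]
          rfl) with hf
  -- membership in the kernel is exactly the counting predicate
  have hker : ∀ p : (Fin w → ZMod 2) × (Fin w → ZMod 2),
      (∀ k : ℕ, s ≤ k → k ≤ t →
        p.1 ᵥ* (mtB w a) ^ (2 ^ k) + p.2 ᵥ* mtQ w a (2 ^ k) = 0) ↔ f p = 0 := by
    intro p
    rw [sys_equiv a hw s t hst ht p.1 p.2]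
    constructor
    · rintro ⟨h1, h2⟩
      refine Prod.ext ?_ ?_
      · exact h1
      · funext i
        show (p.2 ᵥ* (mtB w a) ^ (n + (i : ℕ))) ⟨0, by omega⟩ = 0
        exact h2 (n + (i : ℕ)) (by omega) (by omega)
    · intro h
      have h1 : p.1 ᵥ* (mtB w a) ^ n + p.2 ᵥ* mtQ w a n = 0 := congrArg Prod.fst h
      have h2' : (fun i : Fin d => (p.2 ᵥ* (mtB w a) ^ (n + (i : ℕ))) ⟨0, by omega⟩)
          = (0 : Fin d → ZMod 2) := congrArg Prod.snd h
      refine ⟨h1, ?_⟩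
      intro m hm1 hm2
      have hmd : m - n < d := by omega
      have := congrFun h2' ⟨m - n, hmd⟩
      simp only [Pi.zero_apply] at this
      have he : n + ((⟨m - n, hmd⟩ : Fin d) : ℕ) = m := by simp; omega
      rwa [he] at this
  -- surjectivity
  have hsurj : Function.Surjective f := by
    rintro ⟨y, b⟩
    obtain ⟨u, hu0, huj⟩ := ex_u a hw ha n hn1 (by omega) y
    set φ : ℕ → ZMod 2 := fun m =>
      if hm : m < n then y ⟨n - m, by omega⟩ - (u ᵥ* (mtB w a) ^ n) ⟨n - m, by omega⟩
      else (if hm2 : m - n < d then b ⟨m - n, hm2⟩ else 0) with hφ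
    obtain ⟨v, hvsupp, hval⟩ := ex_v a hw ha (2 ^ t) Nat.one_le_two_pow (by omega) φ
    refine ⟨(u, v), ?_⟩
    refine Prod.ext ?_ ?_
    · show u ᵥ* (mtB w a) ^ n + v ᵥ* mtQ w a n = y
      funext j
      rw [Pi.add_apply, vq_apply a hw n hn1 hnw]
      by_cases hj : 1 ≤ (j : ℕ) ∧ (j : ℕ) ≤ n
      · rw [if_pos hj]
        have hval' := hval (n - (j : ℕ)) (by omega)
        rw [hval'] ; rw [hφ]
        simp only
        rw [dif_pos (by omega : n - (j : ℕ) < n)]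
        have hfin : ∀ hh : n - (n - (j : ℕ)) < w, (⟨n - (n - (j : ℕ)), hh⟩ : Fin w) = j :=
          fun hh => Fin.ext (by simp; omega)
        rw [hfin]
        ring
      · rw [if_neg hj, add_zero]
        rcases Nat.lt_or_ge (n : ℕ) (j : ℕ) with h | h
        · exact huj j h
        · have hj0 : (j : ℕ) = 0 := by omega
          have : j = (⟨0, by omega⟩ : Fin w) := Fin.ext hj0
          rw [this]
          exact hu0.trans (by rw [this])
    · show (fun i : Fin d => (v ᵥ* (mtB w a) ^ (n + (i : ℕ))) ⟨0, by omega⟩) = b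
      funext i
      rw [hval (n + (i : ℕ)) (by omega), hφ]
      simp only
      rw [dif_neg (by omega : ¬(n + (i : ℕ) < n)), dif_pos (by simp : n + (i : ℕ) - n < d)]
      congr 1
      apply Fin.ext
      simp
  -- cardinality bookkeeping
  have hcard1 : Nat.card ((Fin w → ZMod 2) × (Fin w → ZMod 2)) = 2 ^ w * 2 ^ w := by
    rw [Nat.card_prod, Nat.card_fun]
    simp [Nat.card_eq_fintype_card, ZMod.card]
  have hcard2 : Nat.card ((Fin w → ZMod 2) × (Fin d → ZMod 2)) = 2 ^ w * 2 ^ d := by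
    rw [Nat.card_prod, Nat.card_fun, Nat.card_fun]
    simp [Nat.card_eq_fintype_card, ZMod.card]
  have heq : Nat.card {p : (Fin w → ZMod 2) × (Fin w → ZMod 2) //
      ∀ k : ℕ, s ≤ k → k ≤ t →
        p.1 ᵥ* (mtB w a) ^ (2 ^ k) + p.2 ᵥ* mtQ w a (2 ^ k) = 0}
      = Nat.card f.ker := by
    apply Nat.card_congr
    apply Equiv.subtypeEquivRight
    intro p
    rw [hker p]
    exact AddMonoidHom.mem_ker.symm
  have hquot : Nat.card ((Fin w → ZMod 2) × (Fin w → ZMod 2)) =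
      Nat.card (((Fin w → ZMod 2) × (Fin w → ZMod 2)) ⧸ f.ker) * Nat.card f.ker :=
    AddSubgroup.card_eq_card_quotient_mul_card_addSubgroup f.ker
  have hquot2 : Nat.card (((Fin w → ZMod 2) × (Fin w → ZMod 2)) ⧸ f.ker) =
      Nat.card ((Fin w → ZMod 2) × (Fin d → ZMod 2)) :=
    Nat.card_congr (QuotientAddGroup.quotientKerEquivOfSurjective f hsurj).toEquiv
  rw [heq]
  rw [hcard1, hquot2, hcard2] at hquot
  have hdw : d ≤ w := by omega
  have h1 : 2 ^ w * 2 ^ w = 2 ^ w * 2 ^ d * 2 ^ (w - d) := by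
    rw [mul_assoc, ← pow_add 2 d (w - d), show d + (w - d) = w from by omega]
  have h2 : 2 ^ w * 2 ^ d * 2 ^ (w - d) = 2 ^ w * 2 ^ d * Nat.card f.ker :=
    h1.symm.trans hquot
  exact (Nat.eq_of_mul_eq_mul_left (by positivity) h2).symm
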